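/- arXiv:0912.2469 — 3 statements merged into one kernel-verified Lean document; each statement's English description precedes it below -/
import Mathlib

section
/- Let G be an abelian group, n > 0, k_1,…,k_s ∈ ℤ^n, and m_1,…,m_t positive integers such that G^{[m_j]} has finite index in G for each j. Then every boolean combination of cosets (in G^n) of the subgroups D_{k_i, m_j} is a finite union of cosets of (G^{[l]})^n, where l is the least common multiple of m_1,…,m_t. -/
open Pointwise


open Pointwise

/-- Boolean combinations of a family of basic sets: closed under complement (within the
ambient type, here G^n), union, and intersection. -/
inductive BoolComb {α : Type*} (B : Set (Set α)) : Set α → Prop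
  | base {s : Set α} : s ∈ B → BoolComb B s
  | compl {s : Set α} : BoolComb B s → BoolComb B sᶜ
  | union {s t : Set α} : BoolComb B s → BoolComb B t → BoolComb B (s ∪ t)
  | inter {s t : Set α} : BoolComb B s → BoolComb B t → BoolComb B (s ∩ t)

/-- The subgroup G^{[m]} = {g^m : g ∈ G}. -/
def powSubgroup (G : Type*) [CommGroup G] (m : ℕ) : Subgroup G :=
  (powMonoidHom m : G →* G).range

lemma powSubgroup_le (G : Type*) [CommGroup G] {a b : ℕ} (h : a ∣ b) :
    powSubgroup G b ≤ powSubgroup G a := by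
  obtain ⟨c, rfl⟩ := h
  rintro x ⟨y, rfl⟩
  exact ⟨y ^ c, by simp [powMonoidHom, pow_mul, mul_comm a c]⟩

lemma powSubgroup_one (G : Type*) [CommGroup G] : powSubgroup G 1 = ⊤ := by
  ext x; simp [powSubgroup, powMonoidHom]

lemma powSubgroup_mul_finiteIndex (G : Type*) [CommGroup G] {a b : ℕ}
    (ha : (powSubgroup G a).FiniteIndex) (hb : (powSubgroup G b).FiniteIndex) :
    (powSubgroup G (a * b)).FiniteIndex := by
  set K := powSubgroup G (a * b)
  let π : G →* G ⧸ K := QuotientGroup.mk' K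
  let f : G →* G ⧸ K := π.comp (powMonoidHom b)
  have hker : powSubgroup G a ≤ f.ker := by
    rintro x ⟨y, rfl⟩
    simp only [MonoidHom.mem_ker, f, MonoidHom.comp_apply]
    rw [QuotientGroup.mk'_apply, QuotientGroup.eq_one_iff]
    exact ⟨y, by simp [powMonoidHom, pow_mul]⟩
  haveI := ha
  haveI := hb
  haveI : Finite (G ⧸ powSubgroup G a) := inferInstance
  haveI : Finite (G ⧸ powSubgroup G b) := inferInstance
  let g := QuotientGroup.lift (powSubgroup G a) f hker
  have hrange : Set.range g = (f.range : Set (G ⧸ K)) := by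
    ext x
    constructor
    · rintro ⟨q, rfl⟩
      obtain ⟨y, rfl⟩ := QuotientGroup.mk_surjective q
      exact ⟨y, rfl⟩
    · rintro ⟨y, rfl⟩
      exact ⟨QuotientGroup.mk y, rfl⟩
  haveI hMfin : Finite (f.range) := by
    rw [← SetLike.coe_sort_coe, ← hrange]
    exact Set.finite_range g
  -- quotient of G⧸K by f.range is finite
  let φ : G →* (G ⧸ K) ⧸ f.range := (QuotientGroup.mk' f.range).comp π
  have hker2 : powSubgroup G b ≤ φ.ker := by
    rintro x ⟨y, rfl⟩
    simp only [MonoidHom.mem_ker, φ, MonoidHom.comp_apply]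
    rw [QuotientGroup.mk'_apply, QuotientGroup.eq_one_iff]
    exact ⟨y, rfl⟩
  let ψ := QuotientGroup.lift (powSubgroup G b) φ hker2
  have hψ : Function.Surjective ψ := by
    intro q
    obtain ⟨x, rfl⟩ := QuotientGroup.mk_surjective q
    obtain ⟨y, rfl⟩ := QuotientGroup.mk_surjective x
    exact ⟨QuotientGroup.mk y, rfl⟩
  haveI : Finite ((G ⧸ K) ⧸ f.range) := Finite.of_surjective ψ hψ
  haveI : Finite (G ⧸ K) :=
    Finite.of_equiv ((((G ⧸ K) ⧸ f.range)) × f.range) (@Subgroup.groupEquivQuotientProdSubgroup (G ⧸ K) _ f.range).symm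
  exact @Subgroup.finiteIndex_of_finite_quotient G _ K _

lemma powSubgroup_prod_finiteIndex (G : Type*) [CommGroup G] {t : ℕ} (m : Fin t → ℕ)
    (hfi : ∀ j, (powSubgroup G (m j)).FiniteIndex) (S : Finset (Fin t)) :
    (powSubgroup G (∏ j ∈ S, m j)).FiniteIndex := by
  classical
  induction S using Finset.induction with
  | empty =>
      rw [Finset.prod_empty, powSubgroup_one]
      exact Subgroup.instFiniteIndexTop
  | insert _ _ hj ih =>
      rw [Finset.prod_insert hj]
      exact powSubgroup_mul_finiteIndex G (hfi _) ih

lemma powSubgroup_lcm_finiteIndex (G : Type*) [CommGroup G] {t : ℕ} (m : Fin t → ℕ)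
    (hfi : ∀ j, (powSubgroup G (m j)).FiniteIndex) :
    (powSubgroup G (Finset.univ.lcm m)).FiniteIndex := by
  have hdvd : Finset.univ.lcm m ∣ ∏ j, m j :=
    Finset.lcm_dvd fun j _ => Finset.dvd_prod_of_mem m (Finset.mem_univ j)
  haveI := powSubgroup_prod_finiteIndex G m hfi Finset.univ
  exact Subgroup.finiteIndex_of_le (powSubgroup_le G hdvd)


/-- The set D_{k,m} = {g ∈ G^n : χ_k(g) ∈ G^{[m]}}. -/
def Dset {G : Type*} [CommGroup G] {n : ℕ} (k : Fin n → ℤ) (m : ℕ) : Set (Fin n → G) :=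
  {g : Fin n → G | ∏ i, g i ^ k i ∈ powSubgroup G m}

lemma Dset_mul_mem {G : Type*} [CommGroup G] {n : ℕ} (k : Fin n → ℤ) {mj l : ℕ}
    (hdvd : mj ∣ l) {g h : Fin n → G}
    (hg : g ∈ Dset k mj)
    (hh : h ∈ (Subgroup.pi Set.univ fun _ : Fin n => powSubgroup G l : Subgroup (Fin n → G)))
    : g * h ∈ Dset k mj := by
  have hprod : ∏ i, h i ^ k i ∈ powSubgroup G mj := by
    apply Subgroup.prod_mem
    intro i _
    exact Subgroup.zpow_mem _ (powSubgroup_le G hdvd (hh i (Set.mem_univ i))) _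
  show ∏ i, ((g * h) i) ^ k i ∈ powSubgroup G mj
  have heq : ∏ i, ((g * h) i) ^ k i = (∏ i, g i ^ k i) * ∏ i, h i ^ k i := by
    rw [← Finset.prod_mul_distrib]
    exact Finset.prod_congr rfl fun i _ => mul_zpow _ _ _
  rw [heq]
  exact Subgroup.mul_mem _ hg hprod

/-- every boolean combination of cosets of the D_{k_i,m_j} in G^n is a
finite union of cosets of (G^{[l]})^n, where l = lcm(m_1,…,m_t). -/
theorem stmt3 {G : Type*} [CommGroup G] (n : ℕ) (hn : 0 < n) (s t : ℕ)
    (k : Fin s → Fin n → ℤ) (m : Fin t → ℕ) (hm : ∀ j, 0 < m j)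
    (hfi : ∀ j, (powSubgroup G (m j)).FiniteIndex)
    (X : Set (Fin n → G))
    (hX : BoolComb
      {C : Set (Fin n → G) | ∃ (i : Fin s) (j : Fin t) (a : Fin n → G),
        C = a • Dset (k i) (m j)} X) :
    ∃ T : Finset (Fin n → G),
      X = ⋃ a ∈ T, a • ((Subgroup.pi Set.univ fun _ : Fin n =>
        powSubgroup G (Finset.univ.lcm m)) : Set (Fin n → G)) := by
  classical
  set l := Finset.univ.lcm m with hl
  set H : Subgroup (Fin n → G) :=
    Subgroup.pi Set.univ fun _ : Fin n => powSubgroup G l with hHdef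
  haveI hlfi : (powSubgroup G l).FiniteIndex := powSubgroup_lcm_finiteIndex G m hfi
  haveI hHfi : H.FiniteIndex := by
    constructor
    rw [hHdef, Subgroup.index_pi]
    exact Finset.prod_ne_zero_iff.mpr fun i _ => hlfi.index_ne_zero
  haveI hQfin : Finite ((Fin n → G) ⧸ H) := H.finite_quotient_of_finiteIndex
  have hcoset : ∀ a : Fin n → G, a • (H : Set (Fin n → G)) =
      QuotientGroup.mk ⁻¹' {(QuotientGroup.mk a : (Fin n → G) ⧸ H)} := by
    intro a
    ext x
    simp only [Set.mem_preimage, Set.mem_singleton_iff,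
      Set.mem_smul_set_iff_inv_smul_mem, smul_eq_mul]
    rw [eq_comm, QuotientGroup.eq, SetLike.mem_coe]
  have key : ∃ S : Set ((Fin n → G) ⧸ H), X = QuotientGroup.mk ⁻¹' S := by
    induction hX with
    | base h =>
        obtain ⟨i, j, a, rfl⟩ := h
        refine ⟨QuotientGroup.mk '' (a • Dset (k i) (m j)), ?_⟩
        apply Set.Subset.antisymm (Set.subset_preimage_image _ _)
        rintro x ⟨c, hc, hcx⟩
        have hmem : c⁻¹ * x ∈ H := (QuotientGroup.eq).mp hcx
        obtain ⟨d, hd, rfl⟩ := hc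
        have h2 : d * ((a • d)⁻¹ * x) ∈ Dset (k i) (m j) :=
          Dset_mul_mem (k i) (Finset.dvd_lcm (Finset.mem_univ j)) hd hmem
        have hx2 : x = a • (d * ((a • d)⁻¹ * x)) := by
          simp only [smul_eq_mul]; group
        rw [hx2]
        exact Set.smul_mem_smul_set h2
    | compl hs ihs =>
        obtain ⟨S, rfl⟩ := ihs
        exact ⟨Sᶜ, rfl⟩
    | union hs ht ihs iht =>
        obtain ⟨S1, rfl⟩ := ihs
        obtain ⟨S2, rfl⟩ := iht
        exact ⟨S1 ∪ S2, rfl⟩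
    | inter hs ht ihs iht =>
        obtain ⟨S1, rfl⟩ := ihs
        obtain ⟨S2, rfl⟩ := iht
        exact ⟨S1 ∩ S2, rfl⟩
  obtain ⟨S, rfl⟩ := key
  refine ⟨(S.toFinite.toFinset).image Quotient.out, ?_⟩
  ext x
  simp only [Set.mem_preimage, Set.mem_iUnion, Finset.mem_image,
    Set.Finite.mem_toFinset]
  constructor
  · intro hx
    refine ⟨Quotient.out (QuotientGroup.mk x), ⟨QuotientGroup.mk x, hx, rfl⟩, ?_⟩
    rw [hcoset]
    simp [QuotientGroup.out_eq']
  · rintro ⟨a, ⟨q, hq, rfl⟩, hxa⟩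
    rw [hcoset] at hxa
    simp only [Set.mem_preimage, Set.mem_singleton_iff] at hxa
    rwa [hxa, QuotientGroup.out_eq']
end

section
/- Let cl be a pregeometry (closure operator with finite character and Steinitz exchange) on a set M, let G ⊆ M, let H ⊆ G, and let A ⊆ M be cl-independent over G. Suppose cl(H) ∩ G = H. Then cl(A ∪ H) ∩ G = H. -/
/-- Let cl be a pregeometry on M, G ⊆ M, H ⊆ G, and A ⊆ M cl-independent
over G. If cl(H) ∩ G = H, then cl(A ∪ H) ∩ G = H. -/
theorem stmt13 {M : Type*} (cl : Set M → Set M)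
    (hsub : ∀ A : Set M, A ⊆ cl A)
    (hfin : ∀ (A : Set M) (b : M), b ∈ cl A ↔ ∃ A₀ : Set M, A₀ ⊆ A ∧ A₀.Finite ∧ b ∈ cl A₀)
    (hidem : ∀ A : Set M, cl (cl A) = cl A)
    (hexch : ∀ (A : Set M) (a b : M), b ∈ cl (A ∪ {a}) → b ∉ cl A → a ∈ cl (A ∪ {b}))
    (G H : Set M) (hHG : H ⊆ G) (A : Set M)
    (hind : ∀ a ∈ A, a ∉ cl (G ∪ (A \ {a})))
    (hclH : cl H ∩ G = H) :
    cl (A ∪ H) ∩ G = H := by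
  have hmono : ∀ {X Y : Set M}, X ⊆ Y → cl X ⊆ cl Y := by
    intro X Y hXY b hb
    rcases (hfin X b).1 hb with ⟨X₀, hX₀, hfX₀, hbX₀⟩
    exact (hfin Y b).2 ⟨X₀, hX₀.trans hXY, hfX₀, hbX₀⟩
  apply Set.Subset.antisymm
  · rintro g ⟨hgcl, hgG⟩
    rcases (hfin _ g).1 hgcl with ⟨B, hBsub, hBfin, hgB⟩
    -- split B into parts in A and H
    have hgFH : g ∈ cl ((B ∩ A) ∪ H) := by
      apply hmono _ hgB
      intro x hx
      rcases hBsub hx with hx' | hx'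
      · exact Or.inl ⟨hx, hx'⟩
      · exact Or.inr hx'
    have hFfin : (B ∩ A).Finite := hBfin.inter_of_left A
    have hFA : B ∩ A ⊆ A := Set.inter_subset_right
    have key : ∀ (F : Set M), F.Finite → F ⊆ A → g ∈ cl (F ∪ H) → g ∈ cl H := by
      intro F hFfin
      refine Set.Finite.induction_on (motive := fun F _ => F ⊆ A → g ∈ cl (F ∪ H) → g ∈ cl H)
        F hFfin (fun _ h => by simpa using h) ?_
      intro a F haF _hF ih hsubA hg
      by_cases hg' : g ∈ cl (F ∪ H)
      · exact ih (fun x hx => hsubA (Set.mem_insert_of_mem a hx)) hg'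
      · exfalso
        have haA : a ∈ A := hsubA (Set.mem_insert a F)
        have h1 : g ∈ cl ((F ∪ H) ∪ {a}) := by
          apply hmono _ hg
          intro x hx
          rcases hx with hx | hx
          · rcases hx with rfl | hx
            · exact Or.inr rfl
            · exact Or.inl (Or.inl hx)
          · exact Or.inl (Or.inr hx)
        have h2 : a ∈ cl ((F ∪ H) ∪ {g}) := hexch _ _ _ h1 hg'
        have h3 : a ∈ cl (G ∪ (A \ {a})) := by
          apply hmono _ h2
          intro x hx
          rcases hx with hx | hx
          · rcases hx with hx | hx
            · exact Or.inr ⟨hsubA (Set.mem_insert_of_mem a hx),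
                fun hxa => haF (hxa ▸ hx)⟩
            · exact Or.inl (hHG hx)
          · rcases hx with rfl
            exact Or.inl hgG
        exact hind a haA h3
    have : g ∈ cl H := key _ hFfin hFA hgFH
    exact hclH ▸ ⟨this, hgG⟩
  · intro h hh
    exact ⟨hmono Set.subset_union_right (hsub H hh), hHG hh⟩
end

section
/- Let K be a field, M a field extension of K, and consider, for a ∈ M_{>0}^n, b ∈ M^m (in an ordered field setting with well-defined powers a^q for q ∈ K): if L is the minimal K-torus over b containing a — the smallest set of the form {x : χ-equations over b with K-exponents} containing a — then dim L = ldim_K(a / b), the dimension of the image of the span of a in the quotient of the K-vector space (M_{>0},·) by the span of the coordinates of b. -/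
set_option synthInstance.maxHeartbeats 2000000
set_option maxHeartbeats 4000000

open Real

noncomputable section

section Aux
open Matrix Submodule

lemma prodEqOne {n m : ℕ} {a : Fin n → ℝ} {b : Fin m → ℝ}
    (ha : ∀ i, 0 < a i) (hb : ∀ i, 0 < b i) (c : Fin n → ℝ) (d : Fin m → ℝ) :
    (∏ i, a i ^ c i) * (∏ i, b i ^ d i) = 1 ↔
      ∑ i, c i * Real.log (a i) + ∑ i, d i * Real.log (b i) = 0 := by
  have h1 : (∏ i, a i ^ c i) = Real.exp (∑ i, c i * Real.log (a i)) := by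
    rw [Real.exp_sum]
    exact Finset.prod_congr rfl fun i _ => by
      rw [Real.rpow_def_of_pos (ha i), mul_comm]
  have h2 : (∏ i, b i ^ d i) = Real.exp (∑ i, d i * Real.log (b i)) := by
    rw [Real.exp_sum]
    exact Finset.prod_congr rfl fun i _ => by
      rw [Real.rpow_def_of_pos (hb i), mul_comm]
  rw [h1, h2, ← Real.exp_add, Real.exp_eq_one_iff]

lemma baseChange {s n : ℕ} (K : Subfield ℝ) (V : Matrix (Fin s) (Fin n) ↥K)
    (hV : LinearIndependent ↥K (fun k => V k)) :
    LinearIndependent ℝ (fun k => (V.map ((↑) : ↥K → ℝ)) k) := by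
  classical
  set G : Matrix (Fin s) (Fin s) ↥K := V * Vᵀ with hG
  have hGunit : IsUnit G := by
    rw [← Matrix.mulVec_injective_iff_isUnit]
    intro x y hxy
    have hx : G *ᵥ (x - y) = 0 := by
      have : G *ᵥ x = G *ᵥ y := hxy
      rw [Matrix.mulVec_sub, this, sub_self]
    have hu : (x - y) ᵥ* V = 0 := by
      have h0 : ((x - y) ᵥ* V) ⬝ᵥ ((x - y) ᵥ* V) = 0 := by
        have hGx : G *ᵥ (x - y) = V *ᵥ ((x - y) ᵥ* V) := by
          rw [hG, ← Matrix.mulVec_mulVec, Matrix.mulVec_transpose]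
        calc ((x - y) ᵥ* V) ⬝ᵥ ((x - y) ᵥ* V)
            = (x - y) ⬝ᵥ (V *ᵥ ((x - y) ᵥ* V)) := by rw [Matrix.dotProduct_mulVec]
          _ = (x - y) ⬝ᵥ (G *ᵥ (x - y)) := by rw [hGx]
          _ = 0 := by rw [hx, dotProduct_zero]
      exact (dotProduct_self_eq_zero).mp h0
    have : x - y = 0 :=
      Matrix.vecMul_injective_iff.mpr hV (hu.trans (Matrix.zero_vecMul V).symm)
    exact sub_eq_zero.mp this
  set W : Matrix (Fin s) (Fin n) ℝ := V.map ((↑) : ↥K → ℝ) with hW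
  have hGW : W * Wᵀ = G.map ((↑) : ↥K → ℝ) := by
    ext k l
    simp [hW, hG, Matrix.mul_apply, Matrix.map_apply]
  have hWunit : IsUnit (W * Wᵀ) := by
    rw [hGW]
    have h1 : IsUnit G.det := (Matrix.isUnit_iff_isUnit_det G).mp hGunit
    have h2 : (G.map ((↑) : ↥K → ℝ)).det = (K.subtype G.det : ℝ) :=
      (RingHom.map_det K.subtype G).symm
    exact (Matrix.isUnit_iff_isUnit_det _).mpr (h2 ▸ h1.map K.subtype)
  show LinearIndependent ℝ W.row
  rw [← Matrix.vecMul_injective_iff]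
  intro x y hxy
  have hxy' : x ᵥ* W = y ᵥ* W := hxy
  have h3 : x ᵥ* (W * Wᵀ) = y ᵥ* (W * Wᵀ) := by
    rw [← Matrix.vecMul_vecMul, hxy', Matrix.vecMul_vecMul]
  exact Matrix.vecMul_injective_iff_isUnit.mpr hWunit h3

lemma sSup_card_eq_finrank {F V : Type*} [Field F] [AddCommGroup V] [Module F V]
    {n : ℕ} (v : Fin n → V) :
    sSup {k | ∃ s : Finset (Fin n), s.card = k ∧
        LinearIndependent F (fun i : s => v i)} =
      Module.finrank F (Submodule.span F (Set.range v)) := by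
  classical
  set W := Submodule.span F (Set.range v) with hWdef
  haveI : FiniteDimensional F W := FiniteDimensional.span_of_finite F (Set.finite_range v)
  have hub : ∀ k ∈ {k | ∃ s : Finset (Fin n), s.card = k ∧
      LinearIndependent F (fun i : s => v i)}, k ≤ Module.finrank F W := by
    rintro k ⟨s, rfl, hli⟩
    have hf : LinearIndependent F (fun i : s => (⟨v i, subset_span (Set.mem_range_self _)⟩ : W)) := by
      apply LinearIndependent.of_comp W.subtype
      exact hli
    have := hf.fintype_card_le_finrank
    simpa [Fintype.card_coe] using this
  have hmem : Module.finrank F W ∈ {k | ∃ s : Finset (Fin n), s.card = k ∧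
      LinearIndependent F (fun i : s => v i)} := by
    obtain ⟨b, hb, hspan, hli⟩ := exists_linearIndependent F (Set.range v)
    haveI : Fintype b := (Set.Finite.subset (Set.finite_range v) hb).fintype
    have hcard : Module.finrank F W = b.toFinset.card := by
      rw [hWdef, ← hspan, finrank_span_set_eq_card hli]
    have hsec : ∀ x : b, ∃ i, v i = (x : V) := fun x => hb x.2
    choose g hg using hsec
    have ginj : Function.Injective g := by
      intro x y hxy
      apply Subtype.ext
      rw [← hg x, ← hg y, hxy]
    refine ⟨Finset.image g Finset.univ, ?_, ?_⟩
    · rw [Finset.card_image_of_injective _ ginj, Finset.card_univ, hcard,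
        Set.toFinset_card]
    · have hmem' : ∀ i : Finset.image g Finset.univ, v i ∈ b := by
        rintro ⟨i, hi⟩
        obtain ⟨x, -, rfl⟩ := Finset.mem_image.mp hi
        rw [hg x]; exact x.2
      set e : Finset.image g Finset.univ → b := fun i => ⟨v i, hmem' i⟩ with he
      have einj : Function.Injective e := by
        rintro ⟨i, hi⟩ ⟨j, hj⟩ hij
        have hvij : v i = v j := congrArg Subtype.val hij
        obtain ⟨x, -, rfl⟩ := Finset.mem_image.mp hi
        obtain ⟨y, -, rfl⟩ := Finset.mem_image.mp hj
        have : x = y := Subtype.ext (by rw [← hg x, ← hg y]; exact hvij)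
        subst this; rfl
      exact hli.comp e einj
  apply le_antisymm
  · exact csSup_le ⟨0, ⟨∅, by simp, linearIndependent_empty_type⟩⟩ hub
  · exact le_csSup ⟨Module.finrank F W, hub⟩ hmem

end Aux

/-- ldim_K(a/b): the dimension of the image of the span of a in the quotient of the
K-vector space (ℝ_{>0},·) by the span of the coordinates of b; equivalently, the
largest size of a subfamily of a that is multiplicatively K-independent modulo the
span of b. -/
def relLdim (K : Subfield ℝ) {m n : ℕ} (b : Fin m → ℝ) (a : Fin n → ℝ) : ℕ :=
  sSup {k | ∃ s : Finset (Fin n), s.card = k ∧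
    ∀ (c : Fin n → ℝ) (d : Fin m → ℝ), (∀ i, c i ∈ K) → (∀ i, d i ∈ K) →
      (∏ i ∈ s, a i ^ c i) * (∏ i, b i ^ d i) = 1 → ∀ i ∈ s, c i = 0}

/-- if L is the minimal K-torus over b containing a (a K-torus over b is
cut out by monomial equations with exponents in K, with constants monomials in b),
then dim L (the corank of the exponent matrix in the x-variables) equals ldim_K(a/b). -/
theorem stmt14 (K : Subfield ℝ) (m n : ℕ) (a : Fin n → ℝ) (b : Fin m → ℝ)
    (ha : ∀ i, 0 < a i) (hb : ∀ i, 0 < b i)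
    (l : ℕ) (p : Fin l → Fin m → ℝ) (q : Fin l → Fin n → ℝ)
    (hp : ∀ j i, p j i ∈ K) (hq : ∀ j i, q j i ∈ K)
    (L : Set (Fin n → ℝ))
    (hL : L = {x : Fin n → ℝ | (∀ i, 0 < x i) ∧
      ∀ j, (∏ i, b i ^ p j i) * (∏ i, x i ^ q j i) = 1})
    (haL : a ∈ L)
    (hmin : ∀ (l' : ℕ) (p' : Fin l' → Fin m → ℝ) (q' : Fin l' → Fin n → ℝ),
      (∀ j i, p' j i ∈ K) → (∀ j i, q' j i ∈ K) →
      (∀ j, (∏ i, b i ^ p' j i) * (∏ i, a i ^ q' j i) = 1) →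
      L ⊆ {x : Fin n → ℝ | (∀ i, 0 < x i) ∧
        ∀ j, (∏ i, b i ^ p' j i) * (∏ i, x i ^ q' j i) = 1}) :
    n - (Matrix.of q).rank = relLdim K b a := by
  classical
  set la : Fin n → ℝ := fun i => Real.log (a i) with hla
  set lb : Fin m → ℝ := fun i => Real.log (b i) with hlb
  set S : Submodule ↥K ℝ := Submodule.span ↥K (Set.range lb) with hS
  set v : Fin n → ℝ ⧸ S := fun i => S.mkQ (la i) with hv
  have memS : ∀ x : ℝ, x ∈ S ↔ ∃ e : Fin m → ↥K, ∑ i, (e i : ℝ) * lb i = x := by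
    intro x
    rw [hS, Submodule.mem_span_range_iff_exists_fun]
    rfl
  have memS' : ∀ (m' : ℕ) (lc : Fin m' → ℝ) (d : Fin m' → ℝ), (∀ i, d i ∈ K) →
      (∀ i, lc i ∈ S) → ∑ i, d i * lc i ∈ S := by
    intro m' lc d hdK hlc
    have : ∑ i, d i * lc i = ∑ i, (⟨d i, hdK i⟩ : ↥K) • lc i := rfl
    rw [this]
    exact Submodule.sum_mem _ fun i _ => Submodule.smul_mem _ _ (hlc i)
  have hlbS : ∀ i, lb i ∈ S := fun i => Submodule.subset_span (Set.mem_range_self i)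
  -- Step A : relLdim = finrank of span of v
  have hPiff : ∀ s : Finset (Fin n),
      (∀ (c : Fin n → ℝ) (d : Fin m → ℝ), (∀ i, c i ∈ K) → (∀ i, d i ∈ K) →
        (∏ i ∈ s, a i ^ c i) * (∏ i, b i ^ d i) = 1 → ∀ i ∈ s, c i = 0)
      ↔ LinearIndependent ↥K (fun i : s => v i) := by
    intro s
    rw [Fintype.linearIndependent_iff]
    constructor
    · intro hP g hg
      have hsum : (∑ i ∈ s.attach, ((g i : ℝ) * la i.1)) ∈ S := by
        rw [← Submodule.Quotient.mk_eq_zero S]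
        have h3 : S.mkQ (∑ i ∈ s.attach, ((g i : ℝ) * la i.1)) = ∑ i ∈ s.attach, g i • v i.1 := by
          rw [map_sum]
          exact Finset.sum_congr rfl fun i _ => rfl
        rw [Submodule.mkQ_apply] at h3
        rw [h3]
        simpa using hg
      obtain ⟨e, he⟩ := (memS _).mp hsum
      set c : Fin n → ℝ := fun i => if h : i ∈ s then (g ⟨i, h⟩ : ℝ) else 0 with hc
      set d : Fin m → ℝ := fun i => -(e i : ℝ) with hd
      have hcK : ∀ i, c i ∈ K := by
        intro i; rw [hc]; dsimp only
        split
        · exact (g _).2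
        · exact zero_mem K
      have hdK : ∀ i, d i ∈ K := fun i => neg_mem (e i).2
      have hprod : (∏ i ∈ s, a i ^ c i) * (∏ i, b i ^ d i) = 1 := by
        have hext : (∏ i ∈ s, a i ^ c i) = ∏ i, a i ^ c i := by
          apply Finset.prod_subset (Finset.subset_univ s)
          intro i _ hi
          rw [hc]; dsimp only; rw [dif_neg hi, Real.rpow_zero]
        rw [hext, prodEqOne ha hb]
        have h1 : ∑ i, c i * la i = ∑ i ∈ s.attach, ((g i : ℝ) * la i.1) := by
          rw [← Finset.sum_subset (Finset.subset_univ s) (fun i _ hi => by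
                rw [hc]; dsimp only; rw [dif_neg hi, zero_mul])]
          rw [← Finset.sum_attach s (fun i => c i * la i)]
          exact Finset.sum_congr rfl fun i _ => by
            rw [hc]; dsimp only; rw [dif_pos i.2]
        have h2 : ∑ i, d i * lb i = -∑ i, (e i : ℝ) * lb i := by
          rw [← Finset.sum_neg_distrib]
          exact Finset.sum_congr rfl fun i _ => by rw [hd]; ring
        rw [h1, h2, he]
        exact add_neg_cancel _
      intro i
      have h4 := hP c d hcK hdK hprod i.1 i.2
      rw [hc] at h4; dsimp only at h4
      rw [dif_pos i.2] at h4
      have : ((g i : ℝ)) = 0 := by simpa using h4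
      exact_mod_cast this
    · intro hli c d hcK hdK hprod i hi
      set c' : Fin n → ℝ := fun i => if i ∈ s then c i else 0 with hc'
      have hext : (∏ i ∈ s, a i ^ c i) = ∏ i, a i ^ c' i := by
        rw [← Finset.prod_subset (Finset.subset_univ s) (fun i _ hi => by
              rw [hc']; dsimp only; rw [if_neg hi, Real.rpow_zero])]
        exact Finset.prod_congr rfl fun i hi => by
          rw [hc']; dsimp only; rw [if_pos hi]
      rw [hext, prodEqOne ha hb] at hprod
      have hmemS : ∑ i, c' i * la i ∈ S := by
        have : ∑ i, c' i * la i = -∑ i, d i * lb i := by linarith [hprod]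
        rw [this]
        exact neg_mem (memS' m lb d hdK hlbS)
      set g : {x // x ∈ s} → ↥K := fun i => ⟨c i.1, hcK i.1⟩ with hg
      have hzero : ∑ i, g i • v i.1 = 0 := by
        have h5 : ∑ i : {x // x ∈ s}, g i • v i.1
            = S.mkQ (∑ i ∈ s.attach, c i.1 * la i.1) := by
          rw [map_sum]
          exact Finset.sum_congr rfl fun i _ => (S.mkQ.map_smul (g i) (la i.1)).symm
        have h6 : ∑ i ∈ s.attach, c i.1 * la i.1 = ∑ i, c' i * la i := by
          rw [Finset.sum_attach s (fun i => c i * la i)]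
          rw [← Finset.sum_subset (Finset.subset_univ s) (fun i _ hi => by
                rw [hc']; dsimp only; rw [if_neg hi, zero_mul])]
          exact Finset.sum_congr rfl fun i hi => by
            rw [hc']; dsimp only; rw [if_pos hi]
        rw [h5, h6, Submodule.mkQ_apply, Submodule.Quotient.mk_eq_zero]
        exact hmemS
      have h8 := hli g hzero ⟨i, hi⟩
      have h7 : (g ⟨i, hi⟩ : ℝ) = 0 := by rw [h8]; rfl
      simpa [hg] using h7
  have hrel : relLdim K b a = Module.finrank ↥K (Submodule.span ↥K (Set.range v)) := by
    rw [relLdim, ← sSup_card_eq_finrank v]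
    congr 1
    ext k
    exact exists_congr fun s => and_congr_right fun _ => hPiff s
  -- Step B
  set φ : (Fin n → ↥K) →ₗ[↥K] ℝ ⧸ S := Fintype.linearCombination ↥K v with hφ
  have hφapp : ∀ c : Fin n → ↥K, φ c = S.mkQ (∑ i, (c i : ℝ) * la i) := by
    intro c
    rw [hφ, Fintype.linearCombination_apply, map_sum]
    exact Finset.sum_congr rfl fun i _ => (S.mkQ.map_smul (c i) (la i)).symm
  have hker : ∀ c : Fin n → ↥K, (φ c = 0 ↔ ∑ i, (c i : ℝ) * la i ∈ S) := by
    intro c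
    rw [hφapp, Submodule.mkQ_apply, Submodule.Quotient.mk_eq_zero]
  have hrange : LinearMap.range φ = Submodule.span ↥K (Set.range v) := by
    apply le_antisymm
    · rintro x ⟨c, rfl⟩
      rw [hφ, Fintype.linearCombination_apply]
      exact Submodule.sum_mem _ fun i _ =>
        Submodule.smul_mem _ _ (Submodule.subset_span (Set.mem_range_self i))
    · rw [Submodule.span_le]
      rintro x ⟨i, rfl⟩
      refine ⟨Pi.single i 1, ?_⟩
      rw [hφ, Fintype.linearCombination_apply_single, one_smul]
  have hrn : Module.finrank ↥K (LinearMap.range φ) + Module.finrank ↥K (LinearMap.ker φ) = n := by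
    have h := LinearMap.finrank_range_add_finrank_ker φ
    simpa [Module.finrank_fintype_fun_eq_card] using h
  rw [hL] at haL
  obtain ⟨hapos, heqs⟩ := haL
  have hrowker : ∀ j, (fun i => (⟨q j i, hq j i⟩ : ↥K)) ∈ LinearMap.ker φ := by
    intro j
    rw [LinearMap.mem_ker, hker]
    have h9 := (prodEqOne hb ha (p j) (q j)).mp (heqs j)
    have h10 : ∑ i, q j i * la i = -∑ i, p j i * lb i := by
      simp only [hla, hlb]
      linarith
    have h11 : (∑ i, ((⟨q j i, hq j i⟩ : ↥K) : ℝ) * la i) = ∑ i, q j i * la i := rfl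
    rw [h11, h10]
    exact neg_mem (memS' m lb (p j) (fun i => hp j i) hlbS)
  set κ := Module.finrank ↥K (LinearMap.ker φ) with hκ
  set u : Module.Basis (Fin κ) ↥K (LinearMap.ker φ) := Module.finBasis ↥K (LinearMap.ker φ) with hu
  set V : Matrix (Fin κ) (Fin n) ↥K := Matrix.of (fun k => ((u k : Fin n → ↥K))) with hV
  set W : Matrix (Fin κ) (Fin n) ℝ := V.map ((↑) : ↥K → ℝ) with hW
  have hB1 : (Matrix.of q).rank ≤ κ := by
    have hqspan : ∀ j, Matrix.of q j ∈ Submodule.span ℝ (Set.range W) := by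
      intro j
      set x : LinearMap.ker φ := ⟨fun i => (⟨q j i, hq j i⟩ : ↥K), hrowker j⟩ with hx
      have hrepr : ∑ k, u.repr x k • u k = x := u.sum_repr x
      have hexp : Matrix.of q j = ∑ k, ((u.repr x k : ℝ)) • W k := by
        funext i
        calc Matrix.of q j i = ((x : Fin n → ↥K) i : ℝ) := rfl
          _ = (((∑ k, u.repr x k • u k : LinearMap.ker φ) : Fin n → ↥K) i : ℝ) := by
              rw [hrepr]
          _ = ((∑ k, (u.repr x k • (u k : Fin n → ↥K))) i : ℝ) := by
              norm_cast
          _ = ((∑ k, u.repr x k * (u k : Fin n → ↥K) i : ↥K) : ℝ) := by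
              rw [Finset.sum_apply]; rfl
          _ = ∑ k, (u.repr x k : ℝ) * ((u k : Fin n → ↥K) i : ℝ) := by
              push_cast; rfl
          _ = (∑ k, ((u.repr x k : ℝ)) • W k) i := by
              rw [Finset.sum_apply]; rfl
      rw [hexp]
      exact Submodule.sum_mem _ fun k _ =>
        Submodule.smul_mem _ _ (Submodule.subset_span (Set.mem_range_self k))
    calc (Matrix.of q).rank
        = Module.finrank ℝ (Submodule.span ℝ (Set.range (Matrix.of q))) :=
          Matrix.rank_eq_finrank_span_row _
      _ ≤ Module.finrank ℝ (Submodule.span ℝ (Set.range W)) := by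
          apply Submodule.finrank_mono
          rw [Submodule.span_le]
          rintro y ⟨j, rfl⟩
          exact hqspan j
      _ ≤ κ := by simpa [Set.finrank] using finrank_range_le_card (fun k => W k)
  have hVli : LinearIndependent ↥K (fun k => V k) :=
    u.linearIndependent.map' (LinearMap.ker φ).subtype (Submodule.ker_subtype _)
  have hWli : LinearIndependent ℝ (fun k => W k) := baseChange K V hVli
  have hWrank : W.rank = κ := by
    have h := hWli.rank_matrix
    simp at h
    exact h
  have hrelk : ∀ k, ∃ e : Fin m → ↥K, ∑ i, (e i : ℝ) * lb i = ∑ i, ((V k i : ℝ)) * la i := by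
    intro k
    apply (memS _).mp
    have h := (u k).2
    rw [LinearMap.mem_ker, hker] at h
    exact h
  choose ec hec using hrelk
  set p' : Fin κ → Fin m → ℝ := fun k i => -(ec k i : ℝ) with hp'
  set q' : Fin κ → Fin n → ℝ := fun k i => (V k i : ℝ) with hq'
  have hrel_a : ∀ k, (∏ i, b i ^ p' k i) * (∏ i, a i ^ q' k i) = 1 := by
    intro k
    rw [prodEqOne hb ha]
    have h2 : ∑ i, p' k i * Real.log (b i) = -∑ i, (ec k i : ℝ) * lb i := by
      simp only [hlb, hp']
      rw [← Finset.sum_neg_distrib]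
      exact Finset.sum_congr rfl fun i _ => by ring
    have h3 : ∑ i, q' k i * Real.log (a i) = ∑ i, ((V k i : ℝ)) * la i := by
      simp only [hla, hq']
    rw [h2, h3, hec k]
    exact neg_add_cancel _
  have hsubset := hmin κ p' q' (fun k i => neg_mem (ec k i).2) (fun k i => (V k i).2) hrel_a
  have hnull : LinearMap.ker (Matrix.of q).mulVecLin ≤ LinearMap.ker W.mulVecLin := by
    intro t ht
    rw [LinearMap.mem_ker] at ht ⊢
    set x : Fin n → ℝ := fun i => a i * Real.exp (t i) with hx
    have hxpos : ∀ i, 0 < x i := fun i => mul_pos (ha i) (Real.exp_pos _)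
    have hlx : ∀ i, Real.log (x i) = Real.log (a i) + t i := by
      intro i; rw [hx]; dsimp only
      rw [Real.log_mul (ne_of_gt (ha i)) (ne_of_gt (Real.exp_pos _)), Real.log_exp]
    have hxL : x ∈ L := by
      rw [hL]
      refine ⟨hxpos, fun j => ?_⟩
      rw [prodEqOne hb hxpos]
      have h9 := (prodEqOne hb ha (p j) (q j)).mp (heqs j)
      have h10 : ∑ i, q j i * Real.log (x i)
          = ∑ i, q j i * Real.log (a i) + ∑ i, q j i * t i := by
        rw [← Finset.sum_add_distrib]
        exact Finset.sum_congr rfl fun i _ => by rw [hlx i]; ring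
      have h11 : ∑ i, q j i * t i = 0 := by
        have h12 := congrFun ht j
        simpa [Matrix.mulVecLin_apply, Matrix.mulVec, dotProduct] using h12
      rw [h10]
      linarith
    have hxL' := hsubset hxL
    have heq' := hxL'.2
    funext k
    have hA := (prodEqOne hb hxpos (p' k) (q' k)).mp (heq' k)
    have hB := (prodEqOne hb ha (p' k) (q' k)).mp (hrel_a k)
    have h12 : ∑ i, q' k i * Real.log (x i)
        = ∑ i, q' k i * Real.log (a i) + ∑ i, q' k i * t i := by
      rw [← Finset.sum_add_distrib]
      exact Finset.sum_congr rfl fun i _ => by rw [hlx i]; ring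
    have h13 : ∑ i, q' k i * t i = 0 := by
      rw [h12] at hA
      linarith
    show (W.mulVec t) k = (0 : Fin κ → ℝ) k
    have h14 : (W.mulVec t) k = ∑ i, q' k i * t i := by
      simp [Matrix.mulVec, dotProduct, hW, hq', Matrix.map_apply]
    rw [h14, h13]
    rfl
  have hdq : (Matrix.of q).rank
      = Module.finrank ℝ (LinearMap.range (Matrix.of q).mulVecLin) := rfl
  have hdW : W.rank = Module.finrank ℝ (LinearMap.range W.mulVecLin) := rfl
  have e1 : (Matrix.of q).rank
      + Module.finrank ℝ (LinearMap.ker (Matrix.of q).mulVecLin) = n := by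
    rw [hdq]
    have h := LinearMap.finrank_range_add_finrank_ker (Matrix.of q).mulVecLin
    simpa [Module.finrank_fintype_fun_eq_card] using h
  have e2 : W.rank + Module.finrank ℝ (LinearMap.ker W.mulVecLin) = n := by
    rw [hdW]
    have h := LinearMap.finrank_range_add_finrank_ker W.mulVecLin
    simpa [Module.finrank_fintype_fun_eq_card] using h
  have e3 : Module.finrank ℝ (LinearMap.ker (Matrix.of q).mulVecLin)
      ≤ Module.finrank ℝ (LinearMap.ker W.mulVecLin) := Submodule.finrank_mono hnull
  have hB2 : κ ≤ (Matrix.of q).rank := by omega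
  rw [hrel, ← hrange]
  omega
end
end
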